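/- Let μ and λ be n-ary algebra structures on V with λ in the closure of the GL(V)-orbit of μ, and fix positive integers i, j. Suppose c ∈ ℂ is the unique constant such that tr(R_X^i) · tr(R_Y^j) = c · tr(R_X^i ∘ R_Y^j) for all fundamental objects X, Y of μ, and c' ∈ ℂ is the unique constant with the analogous property for λ. Then c = c'. (Degeneration preserves (i,j)-invariants.) -/

import Mathlib

open Function Submodule

/-! Common framework: `V = ℂ^{n+1}`, `n`-ary multiplications as functions
`(Fin n → V) → V`, the action of `GL(V)` on them, orbits, and the
(n+1)-dimensional n-ary Filippov algebras of Kaygorodov–Volkov, each described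
as an alternating `n`-linear map by its values on the increasing tuples of
distinct standard basis vectors (0-indexed: `bt n j` is the tuple omitting `e j`). -/

/-- The underlying space `V = ℂ^{n+1}`. -/
abbrev nV (n : ℕ) : Type := Fin (n + 1) → ℂ

/-- The `j`-th standard basis vector of `V` (0-indexed). -/
def sb (n : ℕ) (j : Fin (n + 1)) : nV n := Pi.single j 1

/-- The increasing `n`-tuple of standard basis vectors omitting `e j`. -/
def bt (n : ℕ) (j : Fin (n + 1)) : Fin n → nV n := fun k => sb n (j.succAbove k)

/-- The action of `GL(V)` (invertible linear maps) on `n`-ary multiplications: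
`(g • μ)(x₁, …, xₙ) = g (μ (g⁻¹ x₁, …, g⁻¹ xₙ))`. -/
noncomputable def glAct (n : ℕ) (g : nV n ≃ₗ[ℂ] nV n) (μ : (Fin n → nV n) → nV n) :
    (Fin n → nV n) → nV n :=
  fun x => g (μ fun i => g.symm (x i))

/-- The `GL(V)`-orbit of an `n`-ary multiplication. -/
def glOrbit (n : ℕ) (μ : (Fin n → nV n) → nV n) : Set ((Fin n → nV n) → nV n) :=
  {ν | ∃ g : nV n ≃ₗ[ℂ] nV n, ν = glAct n g μ}

/-- The algebra `B`: `[e₂, …, e_{n+1}] = e₁` (0-indexed: the tuple omitting `e 0`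
maps to `e 0`), all other increasing basis products zero. -/
def IsB (n : ℕ) (μ : AlternatingMap ℂ (nV n) (nV n) (Fin n)) : Prop :=
  μ (bt n 0) = sb n 0 ∧ ∀ j : Fin (n + 1), j ≠ 0 → μ (bt n j) = 0

/-- The algebra `C₁`: `[e₂, …, e_{n+1}] = e₁`, `[e₁, e₃, …, e_{n+1}] = e₂`. -/
def IsC1 (n : ℕ) (μ : AlternatingMap ℂ (nV n) (nV n) (Fin n)) : Prop :=
  μ (bt n 0) = sb n 0 ∧ μ (bt n 1) = sb n 1 ∧
    ∀ j : Fin (n + 1), j ≠ 0 → j ≠ 1 → μ (bt n j) = 0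

/-- The algebra `C₂(α)`: `[e₂, …, e_{n+1}] = α e₁ + e₂`, `[e₁, e₃, …, e_{n+1}] = e₂`. -/
def IsC2 (n : ℕ) (α : ℂ) (μ : AlternatingMap ℂ (nV n) (nV n) (Fin n)) : Prop :=
  μ (bt n 0) = α • sb n 0 + sb n 1 ∧ μ (bt n 1) = sb n 1 ∧
    ∀ j : Fin (n + 1), j ≠ 0 → j ≠ 1 → μ (bt n j) = 0

/-- The algebra `C₃`: `[e₁, e₃, …, e_{n+1}] = e₁`, `[e₂, e₃, …, e_{n+1}] = e₂`. -/
def IsC3 (n : ℕ) (μ : AlternatingMap ℂ (nV n) (nV n) (Fin n)) : Prop :=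
  μ (bt n 1) = sb n 0 ∧ μ (bt n 0) = sb n 1 ∧
    ∀ j : Fin (n + 1), j ≠ 0 → j ≠ 1 → μ (bt n j) = 0

/-- The algebra `D_r`: `[e₁, …, e_{i-1}, e_{i+1}, …, e_{n+1}] = e_i` for `1 ≤ i ≤ r`
(0-indexed: the tuple omitting `e j` maps to `e j` for `j < r` and to `0` otherwise). -/
def IsD (n r : ℕ) (μ : AlternatingMap ℂ (nV n) (nV n) (Fin n)) : Prop :=
  ∀ j : Fin (n + 1), ((j : ℕ) < r → μ (bt n j) = sb n j) ∧ (r ≤ (j : ℕ) → μ (bt n j) = 0)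

/-- `d` satisfies the defining identity of the `(i,j)`-trace-invariant for the `(m+1)`-ary
structure `μ`: for all fundamental objects `X, Y` (with right multiplications `R_X, R_Y`),
`tr(R_X^i) · tr(R_Y^j) = d · tr(R_X^i ∘ R_Y^j)`. -/
def TraceInvConst (m i j : ℕ)
    (μ : MultilinearMap ℂ (fun _ : Fin (m + 1) => nV (m + 1)) (nV (m + 1))) (d : ℂ) : Prop :=
  ∀ (X Y : Fin m → nV (m + 1)) (RX RY : nV (m + 1) →ₗ[ℂ] nV (m + 1)),
    (∀ z : nV (m + 1), RX z = μ (Fin.cons z X)) →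
    (∀ z : nV (m + 1), RY z = μ (Fin.cons z Y)) →
    LinearMap.trace ℂ (nV (m + 1)) (RX ^ i) * LinearMap.trace ℂ (nV (m + 1)) (RY ^ j) =
      d * LinearMap.trace ℂ (nV (m + 1)) ((RX ^ i) ∘ₗ (RY ^ j))

/-- The matrix of the right multiplication operator at `X` of a multiplication `f`. -/
noncomputable def Mmat (m : ℕ) (f : (Fin (m + 1) → nV (m + 1)) → nV (m + 1))
    (X : Fin m → nV (m + 1)) : Matrix (Fin (m + 2)) (Fin (m + 2)) ℂ :=
  fun k l => f (Fin.cons (Pi.single l 1) X) k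

lemma toMatrix'_eq_Mmat (m : ℕ) (f : (Fin (m + 1) → nV (m + 1)) → nV (m + 1))
    (X : Fin m → nV (m + 1)) (RX : nV (m + 1) →ₗ[ℂ] nV (m + 1))
    (h : ∀ z, RX z = f (Fin.cons z X)) :
    LinearMap.toMatrix' RX = Mmat m f X := by
  ext k l
  rw [LinearMap.toMatrix'_apply, h]
  have hfun : (fun j' => if j' = l then (1 : ℂ) else 0) = Pi.single l 1 := by
    funext j'; simp [Pi.single_apply]
  rfl

lemma toMatrix'_pow (m : ℕ) (RX : nV (m + 1) →ₗ[ℂ] nV (m + 1)) (i : ℕ) :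
    LinearMap.toMatrix' (RX ^ i) = (LinearMap.toMatrix' RX) ^ i := by
  induction i with
  | zero => simp [pow_zero, Module.End.one_eq_id]
  | succ i ih => rw [pow_succ, pow_succ, Module.End.mul_eq_comp,
      LinearMap.toMatrix'_comp, ih]

lemma trace_pow_eq (m : ℕ) (RX : nV (m + 1) →ₗ[ℂ] nV (m + 1)) (i : ℕ) :
    LinearMap.trace ℂ (nV (m + 1)) (RX ^ i) =
      ((LinearMap.toMatrix' RX) ^ i).trace := by
  rw [LinearMap.trace_eq_matrix_trace ℂ (Pi.basisFun ℂ (Fin (m + 2))),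
    LinearMap.toMatrix_eq_toMatrix', toMatrix'_pow]

lemma trace_pow_comp_eq (m : ℕ) (RX RY : nV (m + 1) →ₗ[ℂ] nV (m + 1)) (i j : ℕ) :
    LinearMap.trace ℂ (nV (m + 1)) ((RX ^ i) ∘ₗ (RY ^ j)) =
      ((LinearMap.toMatrix' RX) ^ i * (LinearMap.toMatrix' RY) ^ j).trace := by
  rw [LinearMap.trace_eq_matrix_trace ℂ (Pi.basisFun ℂ (Fin (m + 2))),
    LinearMap.toMatrix_eq_toMatrix', LinearMap.toMatrix'_comp, toMatrix'_pow, toMatrix'_pow]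

/-- The matrix formulation of the trace-invariant identity. -/
def MatInv (m i j : ℕ) (f : (Fin (m + 1) → nV (m + 1)) → nV (m + 1)) (d : ℂ) : Prop :=
  ∀ X Y : Fin m → nV (m + 1),
    ((Mmat m f X) ^ i).trace * ((Mmat m f Y) ^ j).trace =
      d * ((Mmat m f X) ^ i * (Mmat m f Y) ^ j).trace

/-- The canonical right multiplication linear map of a multilinear map. -/
noncomputable def Rlin (m : ℕ)
    (μ : MultilinearMap ℂ (fun _ : Fin (m + 1) => nV (m + 1)) (nV (m + 1)))
    (X : Fin m → nV (m + 1)) : nV (m + 1) →ₗ[ℂ] nV (m + 1) :=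
  μ.toLinearMap (Fin.cons 0 X) 0

lemma Rlin_apply (m : ℕ)
    (μ : MultilinearMap ℂ (fun _ : Fin (m + 1) => nV (m + 1)) (nV (m + 1)))
    (X : Fin m → nV (m + 1)) (z : nV (m + 1)) :
    Rlin m μ X z = μ (Fin.cons z X) := by
  simp [Rlin, MultilinearMap.toLinearMap, Fin.update_cons_zero]

lemma traceInv_of_matInv (m i j : ℕ)
    (ν : MultilinearMap ℂ (fun _ : Fin (m + 1) => nV (m + 1)) (nV (m + 1))) (d : ℂ)
    (h : MatInv m i j ⇑ν d) : TraceInvConst m i j ν d := by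
  intro X Y RX RY hX hY
  rw [trace_pow_eq, trace_pow_eq, trace_pow_comp_eq,
    toMatrix'_eq_Mmat m ⇑ν X RX hX, toMatrix'_eq_Mmat m ⇑ν Y RY hY]
  exact h X Y

lemma myConjPow (m : ℕ) (g : nV (m + 1) ≃ₗ[ℂ] nV (m + 1))
    (f : nV (m + 1) →ₗ[ℂ] nV (m + 1)) (i : ℕ) :
    g.conj f ^ i = g.conj (f ^ i) := by
  induction i with
  | zero => simp [pow_zero, Module.End.one_eq_id]
  | succ i ih =>
      rw [pow_succ, pow_succ, Module.End.mul_eq_comp, Module.End.mul_eq_comp, ih,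
        LinearEquiv.conj_comp]

lemma matInv_orbit (m i j : ℕ)
    (μ : MultilinearMap ℂ (fun _ : Fin (m + 1) => nV (m + 1)) (nV (m + 1))) (c : ℂ)
    (hc : TraceInvConst m i j μ c) (g : nV (m + 1) ≃ₗ[ℂ] nV (m + 1)) :
    MatInv m i j (glAct (m + 1) g ⇑μ) c := by
  intro X Y
  set X' : Fin m → nV (m + 1) := fun k => g.symm (X k) with hX'
  set Y' : Fin m → nV (m + 1) := fun k => g.symm (Y k) with hY'
  have hcons : ∀ (z : nV (m + 1)) (X : Fin m → nV (m + 1)),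
      (fun i => g.symm (Fin.cons (α := fun _ => nV (m + 1)) z X i)) = Fin.cons (g.symm z) (fun k => g.symm (X k)) := by
    intro z X
    have h := Fin.comp_cons (⇑g.symm) z X
    simpa [Function.comp_def] using h
  have hRX : ∀ z, (g.conj (Rlin m μ X')) z = glAct (m + 1) g ⇑μ (Fin.cons z X) := by
    intro z
    rw [LinearEquiv.conj_apply_apply, Rlin_apply]
    simp only [glAct, hcons, hX']
  have hRY : ∀ z, (g.conj (Rlin m μ Y')) z = glAct (m + 1) g ⇑μ (Fin.cons z Y) := by
    intro z
    rw [LinearEquiv.conj_apply_apply, Rlin_apply]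
    simp only [glAct, hcons, hY']
  have e1 := toMatrix'_eq_Mmat m (glAct (m + 1) g ⇑μ) X _ hRX
  have e2 := toMatrix'_eq_Mmat m (glAct (m + 1) g ⇑μ) Y _ hRY
  rw [← e1, ← e2, ← trace_pow_eq, ← trace_pow_eq, ← trace_pow_comp_eq,
    myConjPow, myConjPow, ← LinearEquiv.conj_comp, LinearMap.trace_conj',
    LinearMap.trace_conj', LinearMap.trace_conj']
  exact hc X' Y' _ _ (fun z => Rlin_apply m μ X' z) (fun z => Rlin_apply m μ Y' z)

lemma continuous_Mmat (m : ℕ) (X : Fin m → nV (m + 1)) :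
    Continuous fun f : (Fin (m + 1) → nV (m + 1)) → nV (m + 1) => Mmat m f X := by
  apply continuous_pi; intro k
  apply continuous_pi; intro l
  exact (continuous_apply k).comp (continuous_apply _)

lemma continuous_Mmat_pow (m : ℕ) (X : Fin m → nV (m + 1)) (i : ℕ) :
    Continuous fun f : (Fin (m + 1) → nV (m + 1)) → nV (m + 1) => (Mmat m f X) ^ i := by
  induction i with
  | zero => simpa [pow_zero] using continuous_const
  | succ i ih =>
      simp only [pow_succ]
      exact ih.matrix_mul (continuous_Mmat m X)

lemma matInv_closure (m i j : ℕ)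
    (μ : MultilinearMap ℂ (fun _ : Fin (m + 1) => nV (m + 1)) (nV (m + 1))) (c : ℂ)
    (hc : TraceInvConst m i j μ c)
    (f : (Fin (m + 1) → nV (m + 1)) → nV (m + 1))
    (hf : f ∈ closure (glOrbit (m + 1) ⇑μ)) : MatInv m i j f c := by
  intro X Y
  have hclosed : IsClosed {f : (Fin (m + 1) → nV (m + 1)) → nV (m + 1) |
      ((Mmat m f X) ^ i).trace * ((Mmat m f Y) ^ j).trace =
        c * ((Mmat m f X) ^ i * (Mmat m f Y) ^ j).trace} := by
    apply isClosed_eq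
    · exact ((continuous_Mmat_pow m X i).matrix_trace).mul
        ((continuous_Mmat_pow m Y j).matrix_trace)
    · exact continuous_const.mul
        (((continuous_Mmat_pow m X i).matrix_mul (continuous_Mmat_pow m Y j)).matrix_trace)
  have hsub : glOrbit (m + 1) ⇑μ ⊆ {f : (Fin (m + 1) → nV (m + 1)) → nV (m + 1) |
      ((Mmat m f X) ^ i).trace * ((Mmat m f Y) ^ j).trace =
        c * ((Mmat m f X) ^ i * (Mmat m f Y) ^ j).trace} := by
    rintro f' ⟨g, rfl⟩
    exact matInv_orbit m i j μ c hc g X Y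
  exact (closure_minimal hsub hclosed) hf


/-- Degeneration preserves `(i,j)`-invariants: if `λ = ν` lies in the
closure of the `GL(V)`-orbit of `μ`, `i, j` are positive, `c` is the unique constant with
`tr(R_X^i) tr(R_Y^j) = c · tr(R_X^i ∘ R_Y^j)` for all fundamental objects of `μ`, and `c'`
is the unique such constant for `ν`, then `c = c'`. -/
theorem degeneration_preserves_trace_invariants (m : ℕ) (hm : 1 ≤ m)
    (μ ν : MultilinearMap ℂ (fun _ : Fin (m + 1) => nV (m + 1)) (nV (m + 1)))
    (hdeg : ⇑ν ∈ closure (glOrbit (m + 1) ⇑μ))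
    (i j : ℕ) (hi : 0 < i) (hj : 0 < j) (c c' : ℂ)
    (hc : TraceInvConst m i j μ c) (hcu : ∀ d : ℂ, TraceInvConst m i j μ d → d = c)
    (hc' : TraceInvConst m i j ν c') (hc'u : ∀ d : ℂ, TraceInvConst m i j ν d → d = c') :
    c = c' := by
  exact hc'u c (traceInv_of_matInv m i j ν c (matInv_closure m i j μ c hc ⇑ν hdeg))
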